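/- Let n ≥ 2. The family of group-algebra elements Ã(ρ̃ + a(e_i − e_j)), indexed by all triples (a, i, j) of integers with a ≥ 1, 1 ≤ i < j ≤ n, i ≤ a and j > n − a, is linearly independent over ℤ. (These are exactly the nonzero alternating sums E^ρ(−aα) with a ≥ 1 and α a negative root of sl_n, so the statement says that all such nonzero sums are linearly independent.) -/

import Mathlib

open Finset

/-- The alternating sum `Ã(μ) = Σ_{σ ∈ S_n} sign(σ)·X^{σ·μ}` in the group
algebra `AddMonoidAlgebra ℤ (Fin n → ℤ)`, where `(σ·μ)_i = μ_{σ⁻¹(i)}`. -/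
noncomputable def Atilde (n : ℕ) (μ : Fin n → ℤ) : AddMonoidAlgebra ℤ (Fin n → ℤ) :=
  ∑ σ : Equiv.Perm (Fin n),
    (Equiv.Perm.sign σ : ℤ) • AddMonoidAlgebra.single (fun i => μ (σ⁻¹ i)) 1

/-- The staircase tuple `ρ̃ = (n−1, n−2, …, 1, 0)`. -/
def rhoT (n : ℕ) : Fin n → ℤ := fun i => (n : ℤ) - 1 - (i : ℤ)

/-! ### Auxiliary lemmas -/

lemma mu_apply (n a : ℕ) (i j : Fin n) (hij : i ≠ j) (k : Fin n) :
    (rhoT n + (a:ℤ) • (Pi.single i (1:ℤ) - Pi.single j (1:ℤ)) : Fin n → ℤ) k =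
      if k = i then (n:ℤ)-1-(i:ℤ)+a else if k = j then (n:ℤ)-1-(j:ℤ)-a else (n:ℤ)-1-(k:ℤ) := by
  simp only [Pi.add_apply, Pi.smul_apply, Pi.sub_apply, Pi.single_apply, rhoT, smul_eq_mul]
  split_ifs with h1 h2 <;> simp_all; ring

lemma mu_inj (n a : ℕ) (i j : Fin n) (hij : i < j)
    (hia : (i:ℕ)+1 ≤ a) (hja : n - a < (j:ℕ)+1) :
    Function.Injective (rhoT n + (a:ℤ) • (Pi.single i (1:ℤ) - Pi.single j (1:ℤ)) : Fin n → ℤ) := by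
  intro k k' hkk
  rw [mu_apply n a i j hij.ne, mu_apply n a i j hij.ne] at hkk
  have h1 := i.isLt
  have h2 := j.isLt
  have h3 := k.isLt
  have h4 := k'.isLt
  have h5 : (i:ℕ) < (j:ℕ) := hij
  split_ifs at hkk <;> subst_vars <;> first
    | rfl
    | (apply Fin.ext; omega)

lemma key (n a a' : ℕ) (i j i' j' : Fin n)
    (hij : i < j) (hia : (i:ℕ)+1 ≤ a) (hja : n - a < (j:ℕ)+1)
    (hij' : i' < j') (hia' : (i':ℕ)+1 ≤ a') (hja' : n - a' < (j':ℕ)+1)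
    (σ : Equiv.Perm (Fin n))
    (h : ∀ k, (rhoT n + (a':ℤ) • (Pi.single i' (1:ℤ) - Pi.single j' (1:ℤ)) : Fin n → ℤ) (σ⁻¹ k)
            = (rhoT n + (a:ℤ) • (Pi.single i (1:ℤ) - Pi.single j (1:ℤ)) : Fin n → ℤ) k) :
    a = a' ∧ i = i' ∧ j = j' := by
  have hijne : i ≠ j := hij.ne
  have hijne' : i' ≠ j' := hij'.ne
  simp only [mu_apply n a i j hijne, mu_apply n a' i' j' hijne'] at h
  have hin : ((i:ℕ):ℤ) < n := by exact_mod_cast i.2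
  have hjn : ((j:ℕ):ℤ) < n := by exact_mod_cast j.2
  have hin' : ((i':ℕ):ℤ) < n := by exact_mod_cast i'.2
  have hjn' : ((j':ℕ):ℤ) < n := by exact_mod_cast j'.2
  have hiaZ : ((i:ℕ):ℤ) + 1 ≤ a := by exact_mod_cast hia
  have hiaZ' : ((i':ℕ):ℤ) + 1 ≤ a' := by exact_mod_cast hia'
  have hjaZ : (n:ℤ) - a < (j:ℕ) + 1 := by omega
  have hjaZ' : (n:ℤ) - a' < (j':ℕ) + 1 := by omega
  have hijZ : ((i:ℕ):ℤ) < (j:ℕ) := by exact_mod_cast hij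
  have hijZ' : ((i':ℕ):ℤ) < (j':ℕ) := by exact_mod_cast hij'
  -- step 1 : σ⁻¹ i = i'
  have hs1 : σ⁻¹ i = i' := by
    have hi := h i
    rw [if_pos rfl] at hi
    by_contra hne
    rw [if_neg hne] at hi
    split_ifs at hi <;> omega
  have eq1 : (n:ℤ)-1-(i':ℕ)+a' = (n:ℤ)-1-(i:ℕ)+a := by
    have hi := h i
    rw [if_pos rfl, hs1, if_pos rfl] at hi
    exact hi
  -- step 2 : σ⁻¹ j = j'
  have hs2 : σ⁻¹ j = j' := by
    have hj := h j
    rw [if_neg hijne.symm, if_pos rfl] at hj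
    by_contra hne
    rw [if_neg hne] at hj
    split_ifs at hj <;> omega
  have eq2 : (n:ℤ)-1-(j':ℕ)-a' = (n:ℤ)-1-(j:ℕ)-a := by
    have hj := h j
    rw [if_neg hijne.symm, if_pos rfl, hs2, if_neg hijne'.symm, if_pos rfl] at hj
    exact hj
  -- step 3 : i = i' or i = j'
  have hmem : i = i' ∨ i = j' := by
    by_contra hcon
    push_neg at hcon
    obtain ⟨h1, h2⟩ := hcon
    have hk := h (σ i)
    rw [show σ⁻¹ (σ i) = i from Equiv.Perm.inv_eq_iff_eq.mpr rfl, if_neg h1, if_neg h2] at hk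
    split_ifs at hk with c1 c2
    · omega
    · omega
    · have : σ i = i := by
        have : ((σ i : ℕ) : ℤ) = (i : ℕ) := by omega
        exact Fin.ext (by exact_mod_cast this)
      exact c1 this
  have hii' : i = i' := by
    rcases hmem with h | h
    · exact h
    · exfalso
      rw [h] at eq1 hijZ
      omega
  subst hii'
  have haa' : a = a' := by omega
  subst haa'
  refine ⟨rfl, rfl, ?_⟩
  have : ((j:ℕ):ℤ) = (j':ℕ) := by omega
  exact Fin.ext (by exact_mod_cast this)

lemma Atilde_apply (n : ℕ) (ν p : Fin n → ℤ) :
    (Atilde n ν).coeff p = ∑ σ : Equiv.Perm (Fin n),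
      (Equiv.Perm.sign σ : ℤ) * (if (fun i => ν (σ⁻¹ i)) = p then 1 else 0) := by
  unfold Atilde
  rw [AddMonoidAlgebra.coeff_sum, Finsupp.finset_sum_apply]
  refine Finset.sum_congr rfl fun σ _ => ?_
  rw [AddMonoidAlgebra.coeff_smul, Finsupp.smul_apply, AddMonoidAlgebra.coeff_single, Finsupp.single_apply]
  simp [smul_eq_mul, mul_ite]

lemma Atilde_self (n : ℕ) (ν : Fin n → ℤ) (hν : Function.Injective ν) :
    (Atilde n ν).coeff ν = 1 := by
  rw [Atilde_apply]
  rw [Finset.sum_eq_single 1]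
  · simp
  · intro σ _ hσ
    rw [if_neg, mul_zero]
    intro hc
    apply hσ
    have : ∀ i, σ⁻¹ i = i := fun i => hν (congrFun hc i)
    refine Equiv.ext fun i => ?_
    have h2 := this (σ i)
    rw [show σ⁻¹ (σ i) = i from Equiv.Perm.inv_eq_iff_eq.mpr rfl] at h2
    simpa using h2.symm
  · simp

lemma Atilde_ne (n : ℕ) (ν p : Fin n → ℤ)
    (h : ∀ σ : Equiv.Perm (Fin n), (fun i => ν (σ⁻¹ i)) ≠ p) :
    (Atilde n ν).coeff p = 0 := by
  rw [Atilde_apply]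
  refine Finset.sum_eq_zero fun σ _ => ?_
  rw [if_neg (h σ), mul_zero]

/-- Lemma 4.3 of the paper.
For `n ≥ 2`, the family of elements `Ã(ρ̃ + a(e_i − e_j))`, indexed by the
triples `(a, i, j)` with `a ≥ 1`, `i < j`, `i ≤ a`, `j > n − a` (`1`-indexed;
these are exactly the nonzero `E^ρ(−aα)` with `α` a negative root of `sl_n`),
is linearly independent over `ℤ`. -/
theorem stmt8 (n : ℕ) (hn : 2 ≤ n) :
    LinearIndependent ℤ
      (fun t : {x : ℕ × Fin n × Fin n //
          1 ≤ x.1 ∧ x.2.1 < x.2.2 ∧ (x.2.1 : ℕ) + 1 ≤ x.1 ∧ n - x.1 < (x.2.2 : ℕ) + 1} =>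
        Atilde n (rhoT n + ((t : ℕ × Fin n × Fin n).1 : ℤ) •
          (Pi.single (t : ℕ × Fin n × Fin n).2.1 (1 : ℤ) -
            Pi.single (t : ℕ × Fin n × Fin n).2.2 (1 : ℤ)))) := by
  classical
  set ι := {x : ℕ × Fin n × Fin n //
      1 ≤ x.1 ∧ x.2.1 < x.2.2 ∧ (x.2.1 : ℕ) + 1 ≤ x.1 ∧ n - x.1 < (x.2.2 : ℕ) + 1} with hι
  set ν : ι → (Fin n → ℤ) := fun t =>
      (rhoT n + ((t : ℕ × Fin n × Fin n).1 : ℤ) •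
        (Pi.single (t : ℕ × Fin n × Fin n).2.1 (1 : ℤ) -
          Pi.single (t : ℕ × Fin n × Fin n).2.2 (1 : ℤ)) : Fin n → ℤ) with hν
  rw [linearIndependent_iff']
  intro s g hsum t hts
  obtain ⟨ht1, ht2, ht3, ht4⟩ := t.2
  have hsum' : (∑ t' ∈ s, g t' • Atilde n (ν t') : AddMonoidAlgebra ℤ (Fin n → ℤ)) = 0 := hsum
  have h0 := DFunLike.congr_fun (congrArg AddMonoidAlgebra.coeff hsum') (ν t)
  rw [AddMonoidAlgebra.coeff_sum, Finsupp.finset_sum_apply] at h0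
  simp only [AddMonoidAlgebra.coeff_zero, Finsupp.coe_zero, Pi.zero_apply] at h0
  have h1 : ∀ t' ∈ s, t' ≠ t → (g t' • Atilde n (ν t')).coeff (ν t) = 0 := by
    intro t' _ hne
    obtain ⟨ht1', ht2', ht3', ht4'⟩ := t'.2
    rw [AddMonoidAlgebra.coeff_smul, Finsupp.smul_apply, Atilde_ne n (ν t') (ν t), smul_zero]
    intro σ hc
    apply hne
    have hk : ∀ k, ν t' (σ⁻¹ k) = ν t k := fun k => congrFun hc k
    obtain ⟨haa, hii, hjj⟩ := key n t.1.1 t'.1.1 t.1.2.1 t.1.2.2 t'.1.2.1 t'.1.2.2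
      ht2 ht3 ht4 ht2' ht3' ht4' σ hk
    apply Subtype.ext
    exact Prod.ext haa.symm (Prod.ext hii.symm hjj.symm)
  rw [Finset.sum_eq_single_of_mem t hts h1] at h0
  rw [AddMonoidAlgebra.coeff_smul, Finsupp.smul_apply, Atilde_self n (ν t) (mu_inj n t.1.1 t.1.2.1 t.1.2.2 ht2 ht3 ht4),
    smul_eq_mul, mul_one] at h0
  exact h0
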